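/- Let P and Q be probability measures on a measurable space with D(P‖Q) < ∞, and let F be a measurable real function that is (b,c)-concentrated with respect to Q and is P-integrable. Then | ∫ F dP − ∫ F dQ | ≤ 2 √( c·D(P‖Q) + c·log b ). -/

import Mathlib

open MeasureTheory ProbabilityTheory Filter
open scoped ENNReal NNReal

/-- Relative entropy (Kullback–Leibler divergence): `∫ log (dP/dQ) dP` when `P ≪ Q`
and the log-likelihood ratio is integrable, and `+∞` otherwise. -/
noncomputable def relEnt {Ω : Type*} [MeasurableSpace Ω] (P Q : Measure Ω) : ℝ≥0∞ :=
  open scoped Classical in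
  if P ≪ Q ∧ Integrable (llr P Q) P then ENNReal.ofReal (∫ ω, llr P Q ω ∂P) else ⊤

/-- `F` is `(b,c)`-concentrated with respect to `μ`:
`∫ exp{t(F − ∫F dμ)} dμ ≤ b exp{c t²}` for every `t ∈ ℝ` (the exponential moments
being finite). -/
def Concentrated {Ω : Type*} [MeasurableSpace Ω] (b c : ℝ) (F : Ω → ℝ)
    (μ : Measure Ω) : Prop :=
  Integrable F μ ∧ ∀ t : ℝ,
    Integrable (fun ω => Real.exp (t * (F ω - ∫ x, F x ∂μ))) μ ∧
    ∫ ω, Real.exp (t * (F ω - ∫ x, F x ∂μ)) ∂μ ≤ b * Real.exp (c * t ^ 2)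

/-- Gibbs' inequality: the relative entropy integral is nonnegative. -/
lemma gibbs_llr_nonneg {Ω : Type*} [MeasurableSpace Ω] (P Q : Measure Ω)
    [IsProbabilityMeasure P] [IsProbabilityMeasure Q]
    (hPQ : P ≪ Q) (hint : Integrable (llr P Q) P) :
    0 ≤ ∫ ω, llr P Q ω ∂P := by
  set h : Ω → ℝ := fun ω => ((P.rnDeriv Q ω).toReal)⁻¹ with hh
  have hmeas : Measurable h := (Measure.measurable_rnDeriv P Q).ennreal_toReal.inv
  have hpos : ∀ᵐ ω ∂P, 0 < (P.rnDeriv Q ω).toReal := by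
    filter_upwards [Measure.rnDeriv_pos hPQ, hPQ.ae_le (Measure.rnDeriv_lt_top P Q)]
      with ω h1 h2
    exact ENNReal.toReal_pos h1.ne' h2.ne
  -- lintegral of h is at most 1
  have hlin : ∫⁻ ω, ENNReal.ofReal (h ω) ∂P ≤ 1 := by
    have h1 : ∀ᵐ ω ∂P, ENNReal.ofReal (h ω) = (P.rnDeriv Q ω)⁻¹ := by
      filter_upwards [Measure.rnDeriv_pos hPQ, hPQ.ae_le (Measure.rnDeriv_lt_top P Q)]
        with ω h1 h2
      rw [hh]
      simp only
      rw [← ENNReal.toReal_inv, ENNReal.ofReal_toReal]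
      simp [h1.ne']
    have h2 : ∀ᵐ ω ∂P, (P.rnDeriv Q ω)⁻¹ = Q.rnDeriv P ω := Measure.inv_rnDeriv hPQ
    calc ∫⁻ ω, ENNReal.ofReal (h ω) ∂P = ∫⁻ ω, Q.rnDeriv P ω ∂P := by
          refine lintegral_congr_ae ?_
          filter_upwards [h1, h2] with ω e1 e2; rw [e1, e2]
      _ ≤ Q Set.univ := Measure.lintegral_rnDeriv_le
      _ = 1 := measure_univ
  have hnn : 0 ≤ᵐ[P] h := by
    filter_upwards [hpos] with ω hw
    exact le_of_lt (inv_pos.2 hw)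
  have hinth : Integrable h P := by
    refine ⟨hmeas.aestronglyMeasurable, ?_⟩
    rw [hasFiniteIntegral_iff_ofReal hnn]
    exact lt_of_le_of_lt hlin ENNReal.one_lt_top
  have hih : ∫ ω, h ω ∂P ≤ 1 := by
    rw [integral_eq_lintegral_of_nonneg_ae hnn hmeas.aestronglyMeasurable]
    calc (∫⁻ ω, ENNReal.ofReal (h ω) ∂P).toReal ≤ (1 : ℝ≥0∞).toReal :=
          ENNReal.toReal_mono (by simp) hlin
      _ = 1 := by simp
  have hptw : ∀ᵐ ω ∂P, -llr P Q ω ≤ h ω - 1 := by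
    filter_upwards [hpos] with ω hw
    have := Real.log_le_sub_one_of_pos (inv_pos.2 hw)
    rw [Real.log_inv] at this
    simp only [llr, hh]
    linarith
  have : ∫ ω, -llr P Q ω ∂P ≤ ∫ ω, (h ω - 1) ∂P :=
    integral_mono_ae hint.neg (hinth.sub (integrable_const 1)) hptw
  rw [integral_neg, integral_sub hinth (integrable_const 1)] at this
  simp only [integral_const, measure_univ, probReal_univ, ENNReal.toReal_one, smul_eq_mul, one_mul] at this
  linarith

/-- Proposition 8 (Donsker–Varadhan approximation): if `F` is `(b,c)`-concentrated
with respect to `Q`, then `|∫ F dP − ∫ F dQ| ≤ 2 √(c D(P‖Q) + c log b)`. -/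
theorem concentrated_expectation_approx
    {Ω : Type*} [MeasurableSpace Ω]
    (P Q : Measure Ω) [IsProbabilityMeasure P] [IsProbabilityMeasure Q]
    (hPQ : relEnt P Q < ⊤)
    (b c : ℝ) (hb : 1 ≤ b) (hc : 0 < c)
    (F : Ω → ℝ) (hF : Measurable F)
    (hconc : Concentrated b c F Q)
    (hint : Integrable F P) :
    |∫ ω, F ω ∂P - ∫ ω, F ω ∂Q|
      ≤ 2 * Real.sqrt (c * (relEnt P Q).toReal + c * Real.log b) := by
  classical
  rw [relEnt] at hPQ
  split_ifs at hPQ with hcond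
  swap
  · exact absurd hPQ (lt_irrefl _)
  obtain ⟨hac, hillr⟩ := hcond
  set D : ℝ := ∫ ω, llr P Q ω ∂P with hD
  have hD0 : 0 ≤ D := gibbs_llr_nonneg P Q hac hillr
  have hRE : (relEnt P Q).toReal = D := by
    rw [relEnt, if_pos ⟨hac, hillr⟩, ENNReal.toReal_ofReal hD0]
  set Δ : ℝ := ∫ ω, F ω ∂P - ∫ ω, F ω ∂Q with hΔ
  -- Donsker–Varadhan bound for each t
  have hkey : ∀ t : ℝ, t * Δ ≤ D + Real.log b + c * t ^ 2 := by
    intro t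
    set g : Ω → ℝ := fun ω => t * (F ω - ∫ x, F x ∂Q) with hg
    obtain ⟨hexp, hbound⟩ := hconc.2 t
    have hgP : Integrable g P := (hint.sub (integrable_const _)).const_mul t
    have hipos : 0 < ∫ ω, Real.exp (g ω) ∂Q := integral_exp_pos hexp
    have htilt := integral_llr_tilted_right hac hgP hexp hillr
    have hprob : IsProbabilityMeasure (Q.tilted g) := isProbabilityMeasure_tilted hexp
    have hac' : P ≪ Q.tilted g := hac.trans (absolutelyContinuous_tilted hexp)
    have hint' : Integrable (llr P (Q.tilted g)) P :=
      integrable_llr_tilted_right hac hgP hillr hexp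
    have h0 : 0 ≤ ∫ ω, llr P (Q.tilted g) ω ∂P := gibbs_llr_nonneg P _ hac' hint'
    rw [htilt] at h0
    have hgint : ∫ ω, g ω ∂P = t * Δ := by
      simp only [hg]
      rw [MeasureTheory.integral_const_mul, integral_sub hint (integrable_const _)]
      simp [hΔ, measure_univ]
    have hlog : Real.log (∫ ω, Real.exp (g ω) ∂Q) ≤ Real.log b + c * t ^ 2 := by
      calc Real.log (∫ ω, Real.exp (g ω) ∂Q) ≤ Real.log (b * Real.exp (c * t ^ 2)) :=
            Real.log_le_log hipos hbound
        _ = Real.log b + c * t ^ 2 := by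
            rw [Real.log_mul (by linarith) (Real.exp_ne_zero _), Real.log_exp]
    rw [hgint] at h0
    linarith
  set K : ℝ := c * D + c * Real.log b with hK
  have hlogb : 0 ≤ Real.log b := Real.log_nonneg hb
  have hK0 : 0 ≤ K := by positivity
  have hsq : Δ ^ 2 ≤ 4 * K := by
    set t : ℝ := Δ / (2 * c) with ht
    have htc : 2 * c * t = Δ := by
      rw [ht]; field_simp
    have h1 := hkey t
    nlinarith [h1, htc, hc, sq_nonneg t]
  rw [hRE, ← hK]
  calc |Δ| = Real.sqrt (Δ ^ 2) := (Real.sqrt_sq_eq_abs Δ).symm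
    _ ≤ Real.sqrt (4 * K) := Real.sqrt_le_sqrt hsq
    _ = 2 * Real.sqrt K := by
        rw [show (4 : ℝ) = 2 ^ 2 by norm_num, Real.sqrt_mul (by positivity),
          Real.sqrt_sq (by norm_num)]
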